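/- arXiv:2511.19962 — 2 statements merged into one kernel-verified Lean document; each statement's English description precedes it below -/
import Mathlib

section
/- Let R = k[x_0,...,x_n] be a standard graded polynomial ring and J a graded ideal minimally generated in degrees δ_1 ≤ ... ≤ δ_ℓ with ℓ ≥ 3. Write t_i = min{ j : Tor_i^R(k, J)_j ≠ 0 }. Then for all i ≥ 2, t_i ≥ δ_3 + i. -/
/-!
STATEMENT 0: Let `R = k[x_0,…,x_n]` be a standard graded polynomial ring and `J` a graded
ideal minimally generated in degrees `δ_1 ≤ … ≤ δ_ℓ` with `ℓ ≥ 3`.  Write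
`t_i = min { j : Tor_i^R(k, J)_j ≠ 0 }`.  Then for all `i ≥ 2`, `t_i ≥ δ_3 + i`.

We encode the data via a minimal graded free resolution
`⋯ → F_1 → F_0 → J → 0` with `F i = ⊕_{s : Fin (r i)} R(-(a i s))`:
for a minimal graded free resolution, `Tor_i^R(k,J) ≅ ⊕_s k(-(a i s))`, so
`t_i = min_s (a i s)` and `δ_1 ≤ … ≤ δ_ℓ` is the (monotone) list `a 0`.
The conclusion `t_i ≥ δ_3 + i` is: every twist of `F i` is at least `δ_3 + i = a 0 ⟨2⟩ + i`.
-/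

open MvPolynomial


lemma rep_sum {R : Type*} [Semiring R] {m : ℕ} (x : Fin m →₀ R) :
    ∑ t : Fin m, x t • Finsupp.single t (1 : R) = x := by
  ext j
  rw [Finsupp.finset_sum_apply]
  simp [Finsupp.single_apply]

lemma homog_zero {k : Type*} [CommSemiring k] {σ : Type*} {p : MvPolynomial σ k}
    (hp : p.IsHomogeneous 0) (hc : MvPolynomial.constantCoeff p = 0) : p = 0 := by
  ext d
  by_cases hd : d = 0
  · subst hd
    rw [MvPolynomial.constantCoeff_eq] at hc
    simpa using hc
  · rw [hp.coeff_eq_zero (by simpa [Finsupp.degree_eq_zero_iff] using hd)]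
    simp

set_option maxHeartbeats 1000000 in

theorem stmt0 {k : Type} [Field k] {n : ℕ}
    (J : Ideal (MvPolynomial (Fin (n + 1)) k))
    (r : ℕ → ℕ) (a : (i : ℕ) → Fin (r i) → ℕ)
    -- `J` has at least three minimal generators, of degrees `δ_1 ≤ δ_2 ≤ ⋯`:
    (hl : 3 ≤ r 0) (hmono : Monotone (a 0))
    -- the augmentation `ε : F 0 → J ⊆ R` and the differentials `d i : F (i+1) → F i`:
    (ε : (Fin (r 0) →₀ MvPolynomial (Fin (n + 1)) k) →ₗ[MvPolynomial (Fin (n + 1)) k]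
        MvPolynomial (Fin (n + 1)) k)
    (d : (i : ℕ) →
      ((Fin (r (i + 1)) →₀ MvPolynomial (Fin (n + 1)) k) →ₗ[MvPolynomial (Fin (n + 1)) k]
        (Fin (r i) →₀ MvPolynomial (Fin (n + 1)) k)))
    -- the augmentation surjects onto `J` and is graded:
    (hrange : LinearMap.range ε = J.restrictScalars (MvPolynomial (Fin (n + 1)) k))
    (hεgraded : ∀ s : Fin (r 0), (ε (Finsupp.single s 1)).IsHomogeneous (a 0 s))
    -- gradedness of the differentials:
    (hgraded : ∀ (i : ℕ) (s : Fin (r (i + 1))) (t : Fin (r i)),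
      (d i (Finsupp.single s 1)) t = 0 ∨
        ∃ e : ℕ, ((d i (Finsupp.single s 1)) t).IsHomogeneous e ∧
          a i t + e = a (i + 1) s)
    -- minimality: all entries of the differentials lie in the irrelevant maximal ideal:
    (hmin : ∀ (i : ℕ) (s : Fin (r (i + 1))) (t : Fin (r i)),
      constantCoeff ((d i (Finsupp.single s 1)) t) = 0)
    -- exactness:
    (hexact0 : LinearMap.ker ε = LinearMap.range (d 0))
    (hexact : ∀ i : ℕ, LinearMap.ker (d i) = LinearMap.range (d (i + 1))) :
    -- `t_i ≥ δ_3 + i` for all `i ≥ 2`: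
    ∀ i : ℕ, 2 ≤ i → ∀ s : Fin (r i), a 0 ⟨2, by omega⟩ + i ≤ a i s := by
  classical
  -- any element in the range of `d i` has coordinates with zero constant coefficient
  have hrangecc : ∀ (i : ℕ) (z : Fin (r (i + 1)) →₀ MvPolynomial (Fin (n + 1)) k)
      (j : Fin (r i)), constantCoeff ((d i z) j) = 0 := by
    intro i z j
    conv_lhs => rw [← rep_sum z]
    rw [map_sum, Finsupp.finset_sum_apply, map_sum]
    refine Finset.sum_eq_zero fun t _ => ?_
    rw [map_smul, Finsupp.smul_apply, smul_eq_mul, map_mul, hmin i t j, mul_zero]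
  -- the columns of the differentials are nonzero
  have hcolnz : ∀ (i : ℕ) (s : Fin (r (i + 1))), d i (Finsupp.single s 1) ≠ 0 := by
    intro i s h
    have hmem : Finsupp.single s (1 : MvPolynomial (Fin (n + 1)) k) ∈ LinearMap.ker (d i) := h
    rw [hexact i] at hmem
    obtain ⟨y, hy⟩ := hmem
    have hz := hrangecc (i + 1) y s
    rw [hy, Finsupp.single_eq_same, map_one] at hz
    exact one_ne_zero hz
  -- nonzero entries strictly raise the twist
  have hentry : ∀ (i : ℕ) (s : Fin (r (i + 1))) (t : Fin (r i)),
      (d i (Finsupp.single s 1)) t ≠ 0 → a i t < a (i + 1) s := by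
    intro i s t hne
    rcases hgraded i s t with h0 | ⟨e, he, hsum⟩
    · exact absurd h0 hne
    · rcases Nat.eq_zero_or_pos e with rfl | hpos
      · exact absurd (homog_zero he (hmin i s t)) hne
      · omega
  -- the generators are nonzero
  have hgnz : ∀ j : Fin (r 0), ε (Finsupp.single j 1) ≠ 0 := by
    intro j h
    have hmem : Finsupp.single j (1 : MvPolynomial (Fin (n + 1)) k) ∈ LinearMap.ker ε := h
    rw [hexact0] at hmem
    obtain ⟨y, hy⟩ := hmem
    have hz := hrangecc 0 y j
    rw [hy, Finsupp.single_eq_same, map_one] at hz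
    exact one_ne_zero hz
  have hεs : ∀ (j : Fin (r 0)) (c : MvPolynomial (Fin (n + 1)) k),
      ε (Finsupp.single j c) = c * ε (Finsupp.single j 1) := by
    intro j c
    rw [← mul_one c, ← Finsupp.smul_single', map_smul, smul_eq_mul, mul_one]
  -- base case : every second syzygy has twist at least `δ₃ + 2`
  have hbase : ∀ s : Fin (r 2), a 0 ⟨2, by omega⟩ + 2 ≤ a 2 s := by
    intro s
    by_contra hlt
    push_neg at hlt
    obtain ⟨i0, hi0v⟩ : ∃ j : Fin (r 0), (j : ℕ) = 0 := ⟨⟨0, by omega⟩, rfl⟩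
    obtain ⟨i1, hi1v⟩ : ∃ j : Fin (r 0), (j : ℕ) = 1 := ⟨⟨1, by omega⟩, rfl⟩
    obtain ⟨i2, hi2v⟩ : ∃ j : Fin (r 0), (j : ℕ) = 2 := ⟨⟨2, by omega⟩, rfl⟩
    have hi2e : (⟨2, by omega⟩ : Fin (r 0)) = i2 := by
      apply Fin.ext
      simp [hi2v]
    rw [hi2e] at hlt
    have hi01 : i0 ≠ i1 := by
      intro hx
      rw [hx, hi1v] at hi0v
      omega
    obtain ⟨g0, hg0⟩ : ∃ g, ε (Finsupp.single i0 1) = g := ⟨_, rfl⟩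
    obtain ⟨g1, hg1⟩ : ∃ g, ε (Finsupp.single i1 1) = g := ⟨_, rfl⟩
    have hg0nz : g0 ≠ 0 := hg0 ▸ hgnz i0
    have hg1nz : g1 ≠ 0 := hg1 ▸ hgnz i1
    obtain ⟨A, B, h, hrelAB, hA, hB⟩ :=
      UniqueFactorizationMonoid.exists_reduced_factors g0 hg0nz g1
    have hrel : IsRelPrime B A := hrelAB.symm
    have hhne : h ≠ 0 := by
      intro h0
      rw [h0, zero_mul] at hA
      exact hg0nz hA.symm
    have hAne : A ≠ 0 := by
      intro h0
      rw [h0, mul_zero] at hA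
      exact hg0nz hA.symm
    have hBne : B ≠ 0 := by
      intro h0
      rw [h0, mul_zero] at hB
      exact hg1nz hB.symm
    obtain ⟨τ, hτ⟩ : ∃ τ : Fin (r 0) →₀ MvPolynomial (Fin (n + 1)) k,
        Finsupp.single i0 B - Finsupp.single i1 A = τ := ⟨_, rfl⟩
    have hτker : ε τ = 0 := by
      rw [← hτ, map_sub, hεs i0 B, hεs i1 A, hg0, hg1, ← hA, ← hB]
      ring
    obtain ⟨x, hx⟩ : τ ∈ LinearMap.range (d 0) := by rw [← hexact0]; exact hτker
    obtain ⟨u, hu⟩ : ∃ u, d 1 (Finsupp.single s 1) = u := ⟨_, rfl⟩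
    -- each row of `u` is a multiple of `τ` under `d 0`
    have hP : ∀ t : Fin (r 1), u t ≠ 0 →
        ∃ p : MvPolynomial (Fin (n + 1)) k, d 0 (Finsupp.single t 1) = p • τ := by
      intro t hut
      have hat : a 1 t < a 2 s := hentry 1 s t (hu ▸ hut)
      obtain ⟨σ, hσ⟩ : ∃ σ, d 0 (Finsupp.single t 1) = σ := ⟨_, rfl⟩
      have hsupp : ∀ j : Fin (r 0), j ≠ i0 → j ≠ i1 → σ j = 0 := by
        intro j hj0 hj1
        by_contra hne
        have hlt2 : a 0 j < a 1 t := hentry 0 t j (hσ ▸ hne)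
        have h2j : i2 ≤ j := by
          rw [Fin.le_def, hi2v]
          have hv0 : (j : ℕ) ≠ 0 := fun hx => hj0 (Fin.ext (by rw [hx, hi0v]))
          have hv1 : (j : ℕ) ≠ 1 := fun hx => hj1 (Fin.ext (by rw [hx, hi1v]))
          omega
        have := hmono h2j
        omega
      have hσeq : σ = Finsupp.single i0 (σ i0) + Finsupp.single i1 (σ i1) := by
        ext j
        by_cases hj0 : j = i0
        · subst hj0
          rw [Finsupp.add_apply, Finsupp.single_eq_same, Finsupp.single_eq_of_ne'
            (Ne.symm hi01), add_zero]
        · by_cases hj1 : j = i1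
          · subst hj1
            rw [Finsupp.add_apply, Finsupp.single_eq_same, Finsupp.single_eq_of_ne'
              hi01, zero_add]
          · rw [hsupp j hj0 hj1, Finsupp.add_apply, Finsupp.single_eq_of_ne'
              (Ne.symm hj0), Finsupp.single_eq_of_ne' (Ne.symm hj1), add_zero]
      have hker : ε σ = 0 := by
        have hmem : σ ∈ LinearMap.range (d 0) := ⟨Finsupp.single t 1, hσ⟩
        rw [← hexact0] at hmem
        exact hmem
      rw [hσeq, map_add, hεs i0 (σ i0), hεs i1 (σ i1), hg0, hg1] at hker
      have hcc : σ i0 * A + σ i1 * B = 0 := by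
        apply mul_left_cancel₀ hhne
        rw [mul_zero]
        calc h * (σ i0 * A + σ i1 * B) = σ i0 * (h * A) + σ i1 * (h * B) := by ring
          _ = σ i0 * g0 + σ i1 * g1 := by rw [hA, hB]
          _ = 0 := hker
      have hdvd : B ∣ σ i0 :=
        hrel.dvd_of_dvd_mul_right ⟨-(σ i1), by linear_combination hcc⟩
      obtain ⟨p, hp⟩ := hdvd
      have hc1 : σ i1 = -(A * p) := by
        apply mul_left_cancel₀ hBne
        linear_combination hcc - A * hp
      refine ⟨p, ?_⟩
      rw [hσ, hσeq, hp, hc1, ← hτ]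
      ext j
      rw [Finsupp.smul_apply, Finsupp.sub_apply, Finsupp.add_apply]
      by_cases hj0 : j = i0
      · subst hj0
        rw [Finsupp.single_eq_same, Finsupp.single_eq_same,
          Finsupp.single_eq_of_ne' (Ne.symm hi01), Finsupp.single_eq_of_ne' (Ne.symm hi01)]
        rw [smul_eq_mul]
        ring
      · by_cases hj1 : j = i1
        · subst hj1
          rw [Finsupp.single_eq_same, Finsupp.single_eq_same,
            Finsupp.single_eq_of_ne' hi01, Finsupp.single_eq_of_ne' hi01]
          rw [smul_eq_mul]
          ring
        · rw [Finsupp.single_eq_of_ne' (Ne.symm hj0), Finsupp.single_eq_of_ne' (Ne.symm hj1),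
            Finsupp.single_eq_of_ne' (Ne.symm hj0), Finsupp.single_eq_of_ne' (Ne.symm hj1)]
          rw [smul_eq_mul]
          ring
    -- choose the multipliers and the preimages
    obtain ⟨p, hpdef⟩ : ∃ p : Fin (r 1) → MvPolynomial (Fin (n + 1)) k,
        p = fun t => if hut : u t ≠ 0 then Classical.choose (hP t hut) else 0 := ⟨_, rfl⟩
    have hPs : ∀ t, u t ≠ 0 → d 0 (Finsupp.single t 1) = p t • τ := by
      intro t hut
      rw [hpdef]
      simp only [dif_pos hut]
      exact Classical.choose_spec (hP t hut)
    have hycl : ∀ t : Fin (r 1), u t ≠ 0 →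
        ∃ y, d 1 y = Finsupp.single t 1 - p t • x := by
      intro t hut
      have hmem : Finsupp.single t (1 : MvPolynomial (Fin (n + 1)) k) - p t • x ∈
          LinearMap.ker (d 0) := by
        rw [LinearMap.mem_ker, map_sub, map_smul, hx, hPs t hut, sub_self]
      rw [hexact 0] at hmem
      exact hmem
    obtain ⟨y, hydef⟩ : ∃ y : Fin (r 1) → (Fin (r 2) →₀ MvPolynomial (Fin (n + 1)) k),
        y = fun t => if hut : u t ≠ 0 then Classical.choose (hycl t hut) else 0 := ⟨_, rfl⟩
    have hys : ∀ t, u t ≠ 0 → d 1 (y t) = Finsupp.single t 1 - p t • x := by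
      intro t hut
      rw [hydef]
      simp only [dif_pos hut]
      exact Classical.choose_spec (hycl t hut)
    -- the coefficient sum vanishes
    have hd0u : d 0 u = 0 := by
      have hmem : u ∈ LinearMap.range (d 1) := ⟨Finsupp.single s 1, hu⟩
      rw [← hexact 0] at hmem
      exact hmem
    have hsmul : d 0 u = (∑ t, u t * p t) • τ := by
      conv_lhs => rw [← rep_sum u]
      rw [map_sum, Finset.sum_smul]
      refine Finset.sum_congr rfl fun t _ => ?_
      rw [map_smul]
      by_cases hut : u t = 0
      · rw [hut, zero_smul, zero_mul, zero_smul]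
      · rw [hPs t hut, smul_smul]
    have hsum0 : (∑ t, u t * p t) = 0 := by
      have heq0 : ((∑ t, u t * p t) • τ) = 0 := hsmul.symm.trans hd0u
      have happ : ((∑ t, u t * p t) • τ) i1 = 0 := by rw [heq0, Finsupp.zero_apply]
      rw [Finsupp.smul_apply, smul_eq_mul, ← hτ, Finsupp.sub_apply,
        Finsupp.single_eq_of_ne' hi01, Finsupp.single_eq_same, zero_sub, mul_neg,
        neg_eq_zero] at happ
      exact (mul_eq_zero.mp happ).resolve_right hAne
    -- `u` is the image of an element with coefficients in the maximal ideal
    have hueq : d 1 (∑ t, u t • y t) = u := by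
      rw [map_sum]
      have hterm : ∀ t : Fin (r 1), d 1 (u t • y t) =
          u t • Finsupp.single t 1 - (u t * p t) • x := by
        intro t
        by_cases hut : u t = 0
        · rw [hut, zero_smul, map_zero, zero_smul, zero_mul, zero_smul, sub_zero]
        · rw [map_smul, hys t hut, smul_sub, smul_smul]
      rw [Finset.sum_congr rfl fun t _ => hterm t, Finset.sum_sub_distrib,
        rep_sum, ← Finset.sum_smul, hsum0, zero_smul, sub_zero]
    have hker1 : Finsupp.single s 1 - (∑ t, u t • y t) ∈ LinearMap.ker (d 1) := by
      rw [LinearMap.mem_ker, map_sub, hueq, hu, sub_self]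
    rw [hexact 1] at hker1
    obtain ⟨w, hw⟩ := hker1
    have hcc2 := hrangecc 2 w s
    rw [hw] at hcc2
    rw [Finsupp.sub_apply, Finsupp.single_eq_same, Finsupp.finset_sum_apply,
      map_sub, map_one, map_sum] at hcc2
    have hz : ∀ t : Fin (r 1), constantCoeff ((u t • y t) s) = 0 := by
      intro t
      rw [Finsupp.smul_apply, smul_eq_mul, map_mul]
      have hct : constantCoeff (u t) = 0 := by
        rw [← hu]
        exact hmin 1 s t
      rw [hct, zero_mul]
    rw [Finset.sum_congr rfl fun t _ => hz t, Finset.sum_const_zero, sub_zero] at hcc2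
    exact one_ne_zero hcc2
  -- induction on `i`
  intro i hi
  induction i, hi using Nat.le_induction with
  | base => exact hbase
  | succ m hm IH =>
    intro s
    obtain ⟨t, ht⟩ : ∃ t, (d m (Finsupp.single s 1)) t ≠ 0 := by
      by_contra hall
      push_neg at hall
      exact hcolnz m s (Finsupp.ext hall)
    have h1 := hentry m s t ht
    have h2 := IH t
    omega
end

section
/- Let f_1, f_2, f_3 be three linearly independent quadratic forms in a polynomial ring R over a field such that the ideal (f_1,f_2,f_3) has height 2 and no two of the f_i form a regular sequence. If no linear form divides all three f_i, then there exist linear forms l_1, l_2 (spanning a 2-dimensional space) with (f_1, f_2, f_3) = (l_1, l_2)^2, or else, if their pairwise gcd's are pairwise linearly independent linear forms l_1, l_2, l_3 that are linearly independent, then (f_1,f_2,f_3) = (l_1,l_2) ∩ (l_2,l_3) ∩ (l_1,l_3). -/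
open MvPolynomial

/-- The height of an ideal: the infimum of the heights (in the prime spectrum) of the
minimal primes over it. -/
noncomputable def idealHeight {S : Type} [CommRing S] (I : Ideal S) : ℕ∞ :=
  sInf {h | ∃ p, ∃ hp : p ∈ I.minimalPrimes,
    h = Order.height (⟨p, hp.1.1⟩ : PrimeSpectrum S)}

/-!
STATEMENT 11: Let `f₁, f₂, f₃` be three linearly independent quadratic forms in a
polynomial ring `R = k[x_0,…,x_n]` such that the ideal `(f₁,f₂,f₃)` has height 2 and no
two of the `fᵢ` form a regular sequence.  If no linear form divides all three `fᵢ`, then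
either there exist linear forms `l₁, l₂` spanning a two-dimensional space with
`(f₁,f₂,f₃) = (l₁,l₂)²`, or there exist linearly independent linear forms `l₁, l₂, l₃`
(the pairwise gcd's of the `fᵢ`) with `(f₁,f₂,f₃) = (l₁,l₂) ∩ (l₂,l₃) ∩ (l₁,l₃)`.
-/

section Stmt11AuxSection

open Pointwise

set_option linter.dupNamespace false

namespace Stmt11Aux

variable {k : Type} [Field k] {σ : Type}

/-- Degree-tracking algebra map. -/
noncomputable def θ : MvPolynomial σ k →ₐ[k] Polynomial (MvPolynomial σ k) :=
  MvPolynomial.aeval (fun i => Polynomial.C (X i) * Polynomial.X)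

lemma theta_monomial (m : σ →₀ ℕ) (c : k) :
    θ (monomial m c) = Polynomial.C (monomial m c) * Polynomial.X ^ (m.degree) := by
  classical
  rw [show (monomial m c : MvPolynomial σ k) = C c * m.prod fun i e => X i ^ e from
    MvPolynomial.monomial_eq]
  rw [map_mul]
  have hC : θ (C c : MvPolynomial σ k) = Polynomial.C (C c) := by
    simp [θ, MvPolynomial.algHom_C]
  rw [hC]
  rw [Finsupp.prod, map_prod]
  have : ∀ i ∈ m.support, θ ((X i : MvPolynomial σ k) ^ m i)
      = Polynomial.C ((X i : MvPolynomial σ k) ^ m i) * Polynomial.X ^ (m i) := by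
    intro i _
    rw [map_pow]
    simp only [θ, aeval_X]
    rw [mul_pow, ← Polynomial.C_pow]
  rw [Finset.prod_congr rfl this]
  rw [Finset.prod_mul_distrib, ← map_prod, Finset.prod_pow_eq_pow_sum, Finsupp.degree_apply,
    ← mul_assoc, ← map_mul]

lemma theta_coeff (g : MvPolynomial σ k) (d : ℕ) :
    (θ g).coeff d = homogeneousComponent d g := by
  classical
  conv_lhs => rw [g.as_sum]
  rw [map_sum]
  rw [Polynomial.finset_sum_coeff]
  have : ∀ m ∈ g.support, (θ (monomial m (coeff m g))).coeff d
      = if m.degree = d then monomial m (coeff m g) else 0 := by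
    intro m _
    rw [theta_monomial, Polynomial.C_mul_X_pow_eq_monomial, Polynomial.coeff_monomial]
  rw [Finset.sum_congr rfl this]
  rw [homogeneousComponent_apply, Finset.sum_filter]

lemma theta_homog {g : MvPolynomial σ k} {d : ℕ} (h : g.IsHomogeneous d) :
    θ g = Polynomial.C g * Polynomial.X ^ d := by
  have hmem := (mem_homogeneousSubmodule d g).mpr h
  apply Polynomial.ext
  intro e
  rw [theta_coeff, Polynomial.C_mul_X_pow_eq_monomial, Polynomial.coeff_monomial,
    homogeneousComponent_of_mem hmem]
  by_cases he : e = d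
  · subst he; simp
  · rw [if_neg he, if_neg (Ne.symm he)]

lemma homog_eq_component {g : MvPolynomial σ k} {d : ℕ}
    (h : ∀ e, e ≠ d → homogeneousComponent e g = 0) :
    g = homogeneousComponent d g := by
  conv_lhs => rw [← sum_homogeneousComponent g]
  rw [Finset.sum_eq_single d (fun e _ he => h e he)]
  intro hd
  by_contra hne
  have : g = 0 := by
    conv_lhs => rw [← sum_homogeneousComponent g]
    apply Finset.sum_eq_zero
    intro e he
    apply h
    rintro rfl
    exact hd he
  rw [this] at hne
  simp at hne

/-- A factorization of a nonzero homogeneous polynomial consists of homogeneous factors. -/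
lemma homog_of_mul {f g h : MvPolynomial σ k} {N : ℕ} (hf : f.IsHomogeneous N)
    (hne : f ≠ 0) (heq : f = g * h) :
    ∃ a b, a + b = N ∧ g.IsHomogeneous a ∧ h.IsHomogeneous b := by
  classical
  have hg0 : g ≠ 0 := by rintro rfl; simp at heq; exact hne heq
  have hh0 : h ≠ 0 := by rintro rfl; simp at heq; exact hne heq
  have hθf : θ f = Polynomial.C f * Polynomial.X ^ N := theta_homog hf
  have hθmul : θ g * θ h = Polynomial.C f * Polynomial.X ^ N := by
    rw [← map_mul, ← heq, hθf]
  have hG0 : θ g ≠ 0 := by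
    intro h0
    apply hg0
    have : ∀ e, homogeneousComponent e g = 0 := by
      intro e; rw [← theta_coeff, h0, Polynomial.coeff_zero]
    conv_lhs => rw [← sum_homogeneousComponent g]
    exact Finset.sum_eq_zero fun e _ => this e
  have hH0 : θ h ≠ 0 := by
    intro h0
    apply hh0
    have : ∀ e, homogeneousComponent e h = 0 := by
      intro e; rw [← theta_coeff, h0, Polynomial.coeff_zero]
    conv_lhs => rw [← sum_homogeneousComponent h]
    exact Finset.sum_eq_zero fun e _ => this e
  have hCf : (Polynomial.C f : Polynomial (MvPolynomial σ k)) ≠ 0 := by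
    simpa using hne
  have hnd : (θ g).natDegree + (θ h).natDegree = N := by
    have := Polynomial.natDegree_mul hG0 hH0
    rw [hθmul, Polynomial.C_mul_X_pow_eq_monomial, Polynomial.natDegree_monomial, if_neg hne]
      at this
    omega
  have hntd : (θ g).natTrailingDegree + (θ h).natTrailingDegree = N := by
    have := Polynomial.natTrailingDegree_mul hG0 hH0
    rw [hθmul, Polynomial.C_mul_X_pow_eq_monomial, Polynomial.natTrailingDegree_monomial hne]
      at this
    omega
  have h1 : (θ g).natTrailingDegree ≤ (θ g).natDegree := Polynomial.natTrailingDegree_le_natDegree _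
  have h2 : (θ h).natTrailingDegree ≤ (θ h).natDegree := Polynomial.natTrailingDegree_le_natDegree _
  have heg : (θ g).natTrailingDegree = (θ g).natDegree := by omega
  have heh : (θ h).natTrailingDegree = (θ h).natDegree := by omega
  refine ⟨(θ g).natDegree, (θ h).natDegree, hnd, ?_, ?_⟩
  · have : g = homogeneousComponent (θ g).natDegree g := by
      apply homog_eq_component
      intro e he
      rw [← theta_coeff g e]
      rcases lt_or_gt_of_ne he with hlt | hgt
      · exact Polynomial.coeff_eq_zero_of_lt_natTrailingDegree (by omega)
      · exact Polynomial.coeff_eq_zero_of_natDegree_lt (by omega)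
    nth_rewrite 1 [this]; exact homogeneousComponent_isHomogeneous _ _
  · have : h = homogeneousComponent (θ h).natDegree h := by
      apply homog_eq_component
      intro e he
      rw [← theta_coeff h e]
      rcases lt_or_gt_of_ne he with hlt | hgt
      · exact Polynomial.coeff_eq_zero_of_lt_natTrailingDegree (by omega)
      · exact Polynomial.coeff_eq_zero_of_natDegree_lt (by omega)
    nth_rewrite 1 [this]; exact homogeneousComponent_isHomogeneous _ _


variable {k : Type} [Field k] {σ : Type}

lemma smul_top_singleton (f : MvPolynomial σ k) :
    (f • ⊤ : Submodule (MvPolynomial σ k) (MvPolynomial σ k)) = Ideal.span {f} := by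
  rw [← Submodule.ideal_span_singleton_smul, Ideal.smul_eq_mul, Ideal.mul_top]

lemma mem_smul_top_iff (f x : MvPolynomial σ k) :
    x ∈ (f • ⊤ : Submodule (MvPolynomial σ k) (MvPolynomial σ k)) ↔ f ∣ x := by
  rw [smul_top_singleton, Ideal.mem_span_singleton]

lemma isRegular_of_coprime {f g : MvPolynomial σ k} (hf0 : f ≠ 0)
    (hfc : constantCoeff f = 0) (hgc : constantCoeff g = 0)
    (hcop : ∀ d : MvPolynomial σ k, d ∣ f → d ∣ g → ¬ Prime d) :
    RingTheory.Sequence.IsRegular (MvPolynomial σ k) [f, g] := by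
  rw [RingTheory.Sequence.isRegular_iff]
  constructor
  · rw [RingTheory.Sequence.isWeaklyRegular_cons_iff]
    constructor
    · intro a b hab
      simp only [smul_eq_mul] at hab
      exact mul_left_cancel₀ hf0 hab
    · rw [RingTheory.Sequence.isWeaklyRegular_cons_iff]
      refine ⟨?_, RingTheory.Sequence.IsWeaklyRegular.nil _ _⟩
      intro a b hab
      obtain ⟨x, rfl⟩ := Submodule.Quotient.mk_surjective _ a
      obtain ⟨y, rfl⟩ := Submodule.Quotient.mk_surjective _ b
      have hab' : (Submodule.Quotient.mk (g • x) : QuotSMulTop f (MvPolynomial σ k))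
          = Submodule.Quotient.mk (g • y) := by
        simpa only [Submodule.Quotient.mk_smul] using hab
      rw [Submodule.Quotient.eq, mem_smul_top_iff] at hab' 
      rw [Submodule.Quotient.eq, mem_smul_top_iff]
      have : f ∣ g * (x - y) := by
        simpa [smul_eq_mul, mul_sub] using hab' 
      exact UniqueFactorizationMonoid.dvd_of_dvd_mul_right_of_no_prime_factors hf0
        (fun {d} hdf hdg => hcop d hdf hdg) this
  · intro htop
    have h1 : (1 : MvPolynomial σ k) ∈ Ideal.ofList [f, g] • ⊤ := htop ▸ Submodule.mem_top
    rw [Ideal.smul_eq_mul, Ideal.mul_top] at h1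
    have hset : {r : MvPolynomial σ k | r ∈ [f, g]} = {f, g} := by
      ext r; simp [List.mem_cons]
    rw [Ideal.ofList, hset] at h1
    obtain ⟨a, b, hab⟩ := Ideal.mem_span_pair.mp h1
    have := congrArg constantCoeff hab
    simp [hfc, hgc] at this

lemma homog_zero_eq_C {p : MvPolynomial σ k} (h : p.IsHomogeneous 0) :
    p = C (constantCoeff p) := by
  classical
  ext d
  rw [constantCoeff_eq, coeff_C]
  by_cases hd : d = 0
  · subst hd; simp
  · rw [if_neg (Ne.symm hd)]
    apply h.coeff_eq_zero
    rw [Ne, Finsupp.degree_eq_zero_iff]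
    exact hd

lemma constantCoeff_of_homog {p : MvPolynomial σ k} {N : ℕ} (h : p.IsHomogeneous N)
    (hN : N ≠ 0) : constantCoeff p = 0 := by
  rw [constantCoeff_eq]
  apply h.coeff_eq_zero
  simpa using (Ne.symm hN)

lemma pair_not_smul {V : Type*} [AddCommGroup V] [Module k V] {x y : V}
    (h : LinearIndependent k ![x, y]) (a : k) : y ≠ a • x := by
  intro he
  have := (LinearIndependent.pair_iff.mp h a (-1)) (by rw [he]; simp)
  simpa using this.2

/-- If two linearly independent quadrics do not form a regular sequence, they share a
common linear (prime) factor. -/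
lemma common_linear_factor {f g : MvPolynomial σ k}
    (hf : f.IsHomogeneous 2) (hg : g.IsHomogeneous 2)
    (hli : LinearIndependent k ![f, g])
    (hnr : ¬ RingTheory.Sequence.IsRegular (MvPolynomial σ k) [f, g]) :
    ∃ l : MvPolynomial σ k, Prime l ∧ l.IsHomogeneous 1 ∧ l ∣ f ∧ l ∣ g := by
  have hf0 : f ≠ 0 := hli.ne_zero 0
  have hg0 : g ≠ 0 := hli.ne_zero 1
  have : ∃ p : MvPolynomial σ k, p ∣ f ∧ p ∣ g ∧ Prime p := by
    by_contra hc
    push_neg at hc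
    exact hnr (isRegular_of_coprime hf0 (constantCoeff_of_homog hf (by norm_num))
      (constantCoeff_of_homog hg (by norm_num)) (fun d hdf hdg => hc d hdf hdg))
  obtain ⟨p, hpf, hpg, hp⟩ := this
  obtain ⟨q, hq⟩ := hpf
  obtain ⟨a, b, hab, hpa, hqb⟩ := homog_of_mul hf hf0 hq
  have haub : a ≤ 2 := by omega
  interval_cases a
  · -- p homogeneous of degree 0: a unit, contradiction with primality
    exfalso
    have hpC : p = C (constantCoeff p) := homog_zero_eq_C hpa
    have hc0 : constantCoeff p ≠ 0 := by
      intro h0; rw [h0, map_zero] at hpC; exact hp.ne_zero hpC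
    exact hp.not_unit (hpC ▸ (IsUnit.map (C : k →+* MvPolynomial σ k) (Ne.isUnit hc0)))
  · exact ⟨p, hp, hpa, Dvd.intro q hq.symm, hpg⟩
  · -- p homogeneous of degree 2: f and g both associates of p, contradiction
    exfalso
    obtain ⟨q', hq'⟩ := hpg
    obtain ⟨a', b', hab', hpa', hqb'⟩ := homog_of_mul hg hg0 hq'
    have hp0 : p ≠ 0 := hp.ne_zero
    have ha2 : a' = 2 := hpa'.inj_right hpa hp0
    have hb0 : b = 0 := by omega
    have hb0' : b' = 0 := by omega
    subst hb0; subst hb0'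
    have hqC : q = C (constantCoeff q) := homog_zero_eq_C hqb
    have hq'C : q' = C (constantCoeff q') := homog_zero_eq_C hqb'
    set c := constantCoeff q with hc
    set c' := constantCoeff q' with hc'
    have hcne : c ≠ 0 := by
      intro h0
      rw [hqC, h0, map_zero, mul_zero] at hq
      exact hf0 hq
    have : g = (c' * c⁻¹) • f := by
      rw [hq, hq', hqC, hq'C, smul_eq_C_mul, map_mul]
      have h1 : C c⁻¹ * C c = (1 : MvPolynomial σ k) := by
        rw [← map_mul, inv_mul_cancel₀ hcne, map_one]
      linear_combination (-(p * C c')) * h1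
    exact pair_not_smul hli (c' * c⁻¹) this


variable {k : Type} [Field k] {σ : Type}

lemma degree_one_classify {m : σ →₀ ℕ} (h : m.degree = 1) :
    ∃ i, m = Finsupp.single i 1 := by
  classical
  have hne : m.support.Nonempty := by
    rw [Finsupp.support_nonempty_iff]
    rintro rfl
    simp [map_zero] at h
  have hsum : ∑ i ∈ m.support, m i = 1 := by rw [← Finsupp.degree_apply]; exact h
  have hcard : m.support.card ≤ 1 := by
    have h1 : m.support.card • 1 ≤ ∑ i ∈ m.support, m i :=
      Finset.card_nsmul_le_sum _ _ _ (fun i hi => Nat.one_le_iff_ne_zero.mpr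
        (Finsupp.mem_support_iff.mp hi))
    simpa [hsum] using h1
  obtain ⟨i, hi⟩ := Finset.card_eq_one.mp (le_antisymm hcard hne.card_pos)
  refine ⟨i, ?_⟩
  obtain ⟨hne0, heq⟩ := Finsupp.support_eq_singleton.mp hi
  have hmi : m i = 1 := by rw [hi, Finset.sum_singleton] at hsum; exact hsum
  rw [heq, hmi]

lemma homog_one_rep [Fintype σ] {p : MvPolynomial σ k} (h : p.IsHomogeneous 1) :
    p = ∑ i : σ, (coeff (Finsupp.single i 1) p) • X i := by
  classical
  ext m
  rw [coeff_sum]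
  have hterm : ∀ i : σ, coeff m ((coeff (Finsupp.single i 1) p) • X i)
      = if Finsupp.single i 1 = m then coeff (Finsupp.single i 1) p else 0 := by
    intro i
    rw [coeff_smul, coeff_X']
    by_cases hm : Finsupp.single i 1 = m <;> simp [hm]
  rw [Finset.sum_congr rfl (fun i _ => hterm i)]
  by_cases hm : m.degree = 1
  · obtain ⟨j, rfl⟩ := degree_one_classify hm
    rw [Finset.sum_eq_single j]
    · simp
    · intro i _ hij
      rw [if_neg]
      intro hcon
      exact hij (by
        have := (Finsupp.single_left_inj (one_ne_zero (α := ℕ))).mp hcon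
        exact this)
    · intro hj; exact absurd (Finset.mem_univ j) hj
  · rw [h.coeff_eq_zero hm, Finset.sum_eq_zero]
    intro i _
    rw [if_neg]
    intro hcon
    apply hm
    rw [← hcon, Finsupp.degree_apply, Finsupp.support_single_ne_zero i one_ne_zero,
      Finset.sum_singleton, Finsupp.single_eq_same]

lemma exists_dual {V : Type*} [AddCommGroup V] [Module k V] {x y : V}
    (h : LinearIndependent k ![x, y]) :
    ∃ φ ψ : V →ₗ[k] k, φ x = 1 ∧ φ y = 0 ∧ ψ x = 0 ∧ ψ y = 1 := by
  classical
  set N := Submodule.span k (Set.range ![x, y]) with hN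
  obtain ⟨M, hM⟩ := Submodule.exists_isCompl N
  set proj := N.linearProjOfIsCompl M hM with hproj
  have hxN : x ∈ N := Submodule.subset_span ⟨0, rfl⟩
  have hyN : y ∈ N := Submodule.subset_span ⟨1, rfl⟩
  have hpx : proj x = ⟨x, hxN⟩ := Submodule.linearProjOfIsCompl_apply_left hM ⟨x, hxN⟩
  have hpy : proj y = ⟨y, hyN⟩ := Submodule.linearProjOfIsCompl_apply_left hM ⟨y, hyN⟩
  have hrx : h.repr ⟨x, hxN⟩ = Finsupp.single 0 1 := h.repr_eq_single 0 _ rfl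
  have hry : h.repr ⟨y, hyN⟩ = Finsupp.single 1 1 := h.repr_eq_single 1 _ rfl
  refine ⟨(Finsupp.lapply 0).comp ((h.repr : N →ₗ[k] (Fin 2 →₀ k)).comp proj),
    (Finsupp.lapply 1).comp ((h.repr : N →ₗ[k] (Fin 2 →₀ k)).comp proj), ?_, ?_, ?_, ?_⟩ <;>
    simp [hpx, hpy, hrx, hry, Finsupp.lapply, Finsupp.single_apply]

lemma sub_F_mem (I : Ideal (MvPolynomial σ k)) (F : MvPolynomial σ k →ₐ[k] MvPolynomial σ k)
    (hX : ∀ i, X i - F (X i) ∈ I) : ∀ p, p - F p ∈ I := by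
  intro p
  induction p using MvPolynomial.induction_on with
  | C a =>
    have : F (C a) = C a := by
      rw [← MvPolynomial.algebraMap_eq]
      exact F.commutes a
    rw [this, sub_self]
    exact I.zero_mem
  | add p q hp hq =>
    have := I.add_mem hp hq
    convert this using 1
    rw [map_add]
    ring
  | mul_X p i hp =>
    have hmem := I.add_mem (I.mul_mem_right (X i) hp) (I.mul_mem_left (F p) (hX i))
    have heq : p * X i - F (p * X i)
        = (p - F p) * X i + F p * (X i - F (X i)) := by
      rw [map_mul]; ring
    rw [heq]; exact hmem

lemma li_cons_triple {V : Type*} [AddCommGroup V] [Module k V] {x y z : V}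
    (h : LinearIndependent k ![x, y, z]) :
    LinearIndependent k ![y, z] ∧ x ∉ Submodule.span k (Set.range ![y, z]) := by
  exact linearIndependent_fin_cons.mp h

lemma li_swap {V : Type*} [AddCommGroup V] [Module k V] {x y z : V}
    (h : LinearIndependent k ![x, y, z]) : LinearIndependent k ![y, x, z] := by
  have hinj : Function.Injective (![1, 0, 2] : Fin 3 → Fin 3) := by decide
  have heq : ![x, y, z] ∘ (![1, 0, 2] : Fin 3 → Fin 3) = ![y, x, z] := by
    funext a; fin_cases a <;> rfl
  rw [← heq]
  exact h.comp _ hinj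

lemma li_pair_of_triple {V : Type*} [AddCommGroup V] [Module k V] {x y z : V}
    (h : LinearIndependent k ![x, y, z]) : LinearIndependent k ![x, y] := by
  have hinj : Function.Injective (![0, 1] : Fin 2 → Fin 3) := by decide
  have heq : ![x, y, z] ∘ (![0, 1] : Fin 2 → Fin 3) = ![x, y] := by
    funext a; fin_cases a <;> rfl
  rw [← heq]
  exact h.comp _ hinj

/-- Multiplication by a linear form `l₁` independent from `l₂, l₃` is regular
modulo the ideal `(l₂, l₃)`. -/
lemma linear_reg {l₁ l₂ l₃ : MvPolynomial σ k} [Fintype σ]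
    (h₁ : l₁.IsHomogeneous 1) (h₂ : l₂.IsHomogeneous 1) (h₃ : l₃.IsHomogeneous 1)
    (hind : LinearIndependent k ![l₁, l₂, l₃]) :
    ∀ a, a * l₁ ∈ Ideal.span {l₂, l₃} → a ∈ Ideal.span {l₂, l₃} := by
  classical
  set I := Ideal.span ({l₂, l₃} : Set (MvPolynomial σ k)) with hI
  obtain ⟨hpair, hnotmem⟩ := li_cons_triple hind
  obtain ⟨φ, ψ, hφ₂, hφ₃, hψ₂, hψ₃⟩ := exists_dual hpair
  set F : MvPolynomial σ k →ₐ[k] MvPolynomial σ k :=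
    MvPolynomial.aeval (fun i => X i - (φ (X i)) • l₂ - (ψ (X i)) • l₃) with hF
  have hFX : ∀ i, F (X i) = X i - (φ (X i)) • l₂ - (ψ (X i)) • l₃ := fun i => aeval_X _ i
  have hXmem : ∀ i, X i - F (X i) ∈ I := by
    intro i
    have : X i - F (X i) = (φ (X i)) • l₂ + (ψ (X i)) • l₃ := by rw [hFX]; ring
    rw [this, smul_eq_C_mul, smul_eq_C_mul]
    exact I.add_mem (I.mul_mem_left _ (Ideal.subset_span (by simp)))
      (I.mul_mem_left _ (Ideal.subset_span (by simp)))
  have hsub := sub_F_mem I F hXmem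
  have hFlin : ∀ l : MvPolynomial σ k, l.IsHomogeneous 1 →
      F l = l - (φ l) • l₂ - (ψ l) • l₃ := by
    intro l hl
    have hrep := homog_one_rep hl
    conv_lhs => rw [hrep, map_sum]
    have hterm : ∀ i : σ, F ((coeff (Finsupp.single i 1) l) • X i)
        = (coeff (Finsupp.single i 1) l) • X i
          - ((coeff (Finsupp.single i 1) l) * φ (X i)) • l₂
          - ((coeff (Finsupp.single i 1) l) * ψ (X i)) • l₃ := by
      intro i
      rw [map_smul, hFX, smul_sub, smul_sub, smul_smul, smul_smul]
    rw [Finset.sum_congr rfl (fun i _ => hterm i)]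
    rw [Finset.sum_sub_distrib, Finset.sum_sub_distrib, ← hrep,
      ← Finset.sum_smul, ← Finset.sum_smul]
    have hφl : φ l = ∑ i : σ, (coeff (Finsupp.single i 1) l) * φ (X i) := by
      conv_lhs => rw [hrep]
      rw [map_sum]
      exact Finset.sum_congr rfl (fun i _ => by rw [map_smul, smul_eq_mul])
    have hψl : ψ l = ∑ i : σ, (coeff (Finsupp.single i 1) l) * ψ (X i) := by
      conv_lhs => rw [hrep]
      rw [map_sum]
      exact Finset.sum_congr rfl (fun i _ => by rw [map_smul, smul_eq_mul])
    rw [← hφl, ← hψl]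
  have hF₂ : F l₂ = 0 := by
    rw [hFlin l₂ h₂, hφ₂, hψ₂, one_smul, zero_smul, sub_zero, sub_self]
  have hF₃ : F l₃ = 0 := by
    rw [hFlin l₃ h₃, hφ₃, hψ₃, one_smul, zero_smul, sub_zero, sub_self]
  have hFI : ∀ x ∈ I, F x = 0 := by
    intro x hx
    obtain ⟨a, b, hab⟩ := Ideal.mem_span_pair.mp hx
    rw [← hab, map_add, map_mul, map_mul, hF₂, hF₃, mul_zero, mul_zero, add_zero]
  have hFl₁ : F l₁ ≠ 0 := by
    rw [hFlin l₁ h₁]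
    intro h0
    apply hnotmem
    have h1 : l₁ = (φ l₁) • l₂ + (ψ l₁) • l₃ := by
      have h0' : l₁ - (φ l₁ • l₂ + ψ l₁ • l₃) = 0 := by
        rw [← h0]; abel
      rw [← sub_eq_zero]; exact h0' 
    rw [h1]
    exact Submodule.add_mem _
      (Submodule.smul_mem _ _ (Submodule.subset_span ⟨0, rfl⟩))
      (Submodule.smul_mem _ _ (Submodule.subset_span ⟨1, rfl⟩))
  intro a ha
  have h0 : F a * F l₁ = 0 := by rw [← map_mul]; exact hFI _ ha
  have hFa : F a = 0 := by
    rcases mul_eq_zero.mp h0 with h | h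
    · exact h
    · exact absurd h hFl₁
  have := hsub a
  rw [hFa, sub_zero] at this
  exact this


lemma factor_two {f la lb : MvPolynomial σ k} (hf : f.IsHomogeneous 2) (hf0 : f ≠ 0)
    (hpa : Prime la) (hpb : Prime lb) (hha : la.IsHomogeneous 1) (hhb : lb.IsHomogeneous 1)
    (hnd : ¬ lb ∣ la) (hdaf : la ∣ f) (hdbf : lb ∣ f) :
    ∃ c : k, c ≠ 0 ∧ f = C c * (la * lb) := by
  obtain ⟨q, hq⟩ := hdaf
  have hdbq : lb ∣ q := by
    have h' : lb ∣ la * q := by rw [← hq]; exact hdbf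
    rcases (Prime.dvd_mul hpb).mp h' with h | h
    · exact absurd h hnd
    · exact h
  obtain ⟨r, hr⟩ := hdbq
  have hfr : f = (la * lb) * r := by rw [hq, hr]; ring
  obtain ⟨a, b, hab, hab1, hrb⟩ := homog_of_mul hf hf0 hfr
  have h2 : (la * lb).IsHomogeneous 2 := by
    have := hha.mul hhb
    norm_num at this
    exact this
  have hla0 : la * lb ≠ 0 := mul_ne_zero hpa.ne_zero hpb.ne_zero
  have ha2 : a = 2 := hab1.inj_right h2 hla0
  have hb0 : b = 0 := by omega
  subst hb0
  have hrC : r = C (constantCoeff r) := homog_zero_eq_C hrb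
  refine ⟨constantCoeff r, ?_, ?_⟩
  · intro h0
    rw [hfr, hrC, h0, map_zero, mul_zero] at hf0
    exact hf0 rfl
  · rw [hfr]; nth_rewrite 1 [hrC]; ring


variable {k : Type} [Field k] {σ : Type}

lemma mem_of_C_mul {u : k} (hu : u ≠ 0) {x : MvPolynomial σ k} {I : Ideal (MvPolynomial σ k)}
    (h : C u * x ∈ I) : x ∈ I := by
  have hx : x = C u⁻¹ * (C u * x) := by
    rw [← mul_assoc, ← map_mul, inv_mul_cancel₀ hu, map_one, one_mul]
  rw [hx]
  exact I.mul_mem_left _ h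

lemma li_pair_of_not_dvd {la lb : MvPolynomial σ k} (ha0 : la ≠ 0) (hnd : ¬ la ∣ lb) :
    LinearIndependent k ![la, lb] := by
  rw [LinearIndependent.pair_iff]
  intro s t hst
  by_cases ht : t = 0
  · subst ht
    refine ⟨?_, rfl⟩
    have h0 : s • la = 0 := by simpa using hst
    rcases smul_eq_zero.mp h0 with h | h
    · exact h
    · exact absurd h ha0
  · exfalso
    apply hnd
    have h4 : t • lb = (-s) • la := by
      have := add_eq_zero_iff_eq_neg.mp hst
      rw [neg_smul, this, neg_neg]
    have h3 : lb = (-s / t) • la := by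
      calc lb = (t⁻¹ * t) • lb := by rw [inv_mul_cancel₀ ht, one_smul]
        _ = t⁻¹ • (t • lb) := by rw [mul_smul]
        _ = t⁻¹ • ((-s) • la) := by rw [h4]
        _ = (-s / t) • la := by rw [smul_smul]; congr 1; field_simp
    exact ⟨C (-s / t), by rw [h3, smul_eq_C_mul]; ring⟩

lemma li_pair23_of_triple {V : Type*} [AddCommGroup V] [Module k V] {x y z : V}
    (h : LinearIndependent k ![x, y, z]) : LinearIndependent k ![y, z] := by
  have hinj : Function.Injective (![1, 2] : Fin 2 → Fin 3) := by decide
  have heq : ![x, y, z] ∘ (![1, 2] : Fin 2 → Fin 3) = ![y, z] := by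
    funext a; fin_cases a <;> rfl
  rw [← heq]
  exact h.comp _ hinj

lemma li_pair13_of_triple {V : Type*} [AddCommGroup V] [Module k V] {x y z : V}
    (h : LinearIndependent k ![x, y, z]) : LinearIndependent k ![x, z] := by
  have hinj : Function.Injective (![0, 2] : Fin 2 → Fin 3) := by decide
  have heq : ![x, y, z] ∘ (![0, 2] : Fin 2 → Fin 3) = ![x, z] := by
    funext a; fin_cases a <;> rfl
  rw [← heq]
  exact h.comp _ hinj

lemma span_pair_sq (l₁ l₂ : MvPolynomial σ k) :
    (Ideal.span {l₁, l₂}) ^ 2 = Ideal.span {l₁ * l₁, l₁ * l₂, l₂ * l₂} := by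
  rw [pow_two, Ideal.span_mul_span']
  apply le_antisymm
  · rw [Ideal.span_le]
    rintro x hx
    rw [Set.mem_mul] at hx
    obtain ⟨a, ha, b, hb, rfl⟩ := hx
    simp only [Set.mem_insert_iff, Set.mem_singleton_iff] at ha hb
    rcases ha with rfl | rfl <;> rcases hb with rfl | rfl <;>
      apply Ideal.subset_span <;> simp [mul_comm]
  · rw [Ideal.span_le]
    rintro x hx
    simp only [Set.mem_insert_iff, Set.mem_singleton_iff] at hx
    rcases hx with rfl | rfl | rfl <;>
      exact Set.mul_mem_mul (by simp) (by simp) |> Ideal.subset_span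

end Stmt11Aux

end Stmt11AuxSection

open Stmt11Aux in
theorem stmt11 {k : Type} [Field k] {n : ℕ}
    (f₁ f₂ f₃ : MvPolynomial (Fin (n + 1)) k)
    (h₁ : f₁.IsHomogeneous 2) (h₂ : f₂.IsHomogeneous 2) (h₃ : f₃.IsHomogeneous 2)
    (hli : LinearIndependent k ![f₁, f₂, f₃])
    (hht : idealHeight (Ideal.span {f₁, f₂, f₃}) = 2)
    -- no two of the `fᵢ` form a regular sequence:
    (hnoreg : ∀ g h : MvPolynomial (Fin (n + 1)) k,
      g ∈ ({f₁, f₂, f₃} : Set (MvPolynomial (Fin (n + 1)) k)) →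
      h ∈ ({f₁, f₂, f₃} : Set (MvPolynomial (Fin (n + 1)) k)) → g ≠ h →
      ¬ RingTheory.Sequence.IsRegular (MvPolynomial (Fin (n + 1)) k) [g, h])
    -- no linear form divides all three:
    (hnogcd : ¬ ∃ l : MvPolynomial (Fin (n + 1)) k,
      l ≠ 0 ∧ l.IsHomogeneous 1 ∧ l ∣ f₁ ∧ l ∣ f₂ ∧ l ∣ f₃) :
    (∃ l₁ l₂ : MvPolynomial (Fin (n + 1)) k,
      l₁.IsHomogeneous 1 ∧ l₂.IsHomogeneous 1 ∧ LinearIndependent k ![l₁, l₂] ∧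
      Ideal.span {f₁, f₂, f₃} = (Ideal.span {l₁, l₂}) ^ 2) ∨
    (∃ l₁ l₂ l₃ : MvPolynomial (Fin (n + 1)) k,
      l₁.IsHomogeneous 1 ∧ l₂.IsHomogeneous 1 ∧ l₃.IsHomogeneous 1 ∧
      LinearIndependent k ![l₁, l₂, l₃] ∧
      l₁ ∣ f₁ ∧ l₁ ∣ f₂ ∧ l₂ ∣ f₂ ∧ l₂ ∣ f₃ ∧ l₃ ∣ f₁ ∧ l₃ ∣ f₃ ∧
      Ideal.span {f₁, f₂, f₃} =
        Ideal.span {l₁, l₂} ⊓ Ideal.span {l₂, l₃} ⊓ Ideal.span {l₁, l₃}) := by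
  classical
  have hli12 : LinearIndependent k ![f₁, f₂] := li_pair_of_triple hli
  have hli23 : LinearIndependent k ![f₂, f₃] := li_pair23_of_triple hli
  have hli13 : LinearIndependent k ![f₁, f₃] := li_pair13_of_triple hli
  have hne12 : f₁ ≠ f₂ := fun h => pair_not_smul hli12 1 (by rw [one_smul, ← h])
  have hne23 : f₂ ≠ f₃ := fun h => pair_not_smul hli23 1 (by rw [one_smul, ← h])
  have hne13 : f₁ ≠ f₃ := fun h => pair_not_smul hli13 1 (by rw [one_smul, ← h])
  obtain ⟨l₁, hl₁p, hl₁h, hl₁f₁, hl₁f₂⟩ := common_linear_factor h₁ h₂ hli12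
    (hnoreg f₁ f₂ (by simp) (by simp) hne12)
  obtain ⟨l₂, hl₂p, hl₂h, hl₂f₂, hl₂f₃⟩ := common_linear_factor h₂ h₃ hli23
    (hnoreg f₂ f₃ (by simp) (by simp) hne23)
  obtain ⟨l₃, hl₃p, hl₃h, hl₃f₁, hl₃f₃⟩ := common_linear_factor h₁ h₃ hli13
    (hnoreg f₁ f₃ (by simp) (by simp) hne13)
  -- non-divisibility among the three common factors (else a common linear factor of all)
  have h12 : ¬ l₁ ∣ l₂ := fun hd =>
    hnogcd ⟨l₁, hl₁p.ne_zero, hl₁h, hl₁f₁, hl₁f₂, hd.trans hl₂f₃⟩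
  have h21 : ¬ l₂ ∣ l₁ := fun hd =>
    hnogcd ⟨l₂, hl₂p.ne_zero, hl₂h, hd.trans hl₁f₁, hl₂f₂, hl₂f₃⟩
  have h13 : ¬ l₁ ∣ l₃ := fun hd =>
    hnogcd ⟨l₁, hl₁p.ne_zero, hl₁h, hl₁f₁, hl₁f₂, hd.trans hl₃f₃⟩
  have h31 : ¬ l₃ ∣ l₁ := fun hd =>
    hnogcd ⟨l₃, hl₃p.ne_zero, hl₃h, hl₃f₁, hd.trans hl₁f₂, hl₃f₃⟩
  have h23 : ¬ l₂ ∣ l₃ := fun hd =>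
    hnogcd ⟨l₂, hl₂p.ne_zero, hl₂h, hd.trans hl₃f₁, hl₂f₂, hl₂f₃⟩
  have h32 : ¬ l₃ ∣ l₂ := fun hd =>
    hnogcd ⟨l₃, hl₃p.ne_zero, hl₃h, hl₃f₁, hd.trans hl₂f₂, hl₃f₃⟩
  -- factor the quadrics
  obtain ⟨c₁, hc₁, hf₁⟩ := factor_two h₁ (hli.ne_zero 0) hl₁p hl₃p hl₁h hl₃h h31 hl₁f₁ hl₃f₁
  obtain ⟨c₂, hc₂, hf₂⟩ := factor_two h₂ (hli.ne_zero 1) hl₁p hl₂p hl₁h hl₂h h21 hl₁f₂ hl₂f₂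
  obtain ⟨c₃, hc₃, hf₃⟩ := factor_two h₃ (hli.ne_zero 2) hl₂p hl₃p hl₂h hl₃h h32 hl₂f₃ hl₃f₃
  have hli12l : LinearIndependent k ![l₁, l₂] := li_pair_of_not_dvd hl₁p.ne_zero h12
  by_cases hind3 : LinearIndependent k ![l₁, l₂, l₃]
  · -- Case B : three independent linear forms
    right
    refine ⟨l₁, l₂, l₃, hl₁h, hl₂h, hl₃h, hind3, ?_, ?_, ?_, ?_, ?_, ?_, ?_⟩
    · exact ⟨C c₁ * l₃, by rw [hf₁]; ring⟩
    · exact ⟨C c₂ * l₂, by rw [hf₂]; ring⟩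
    · exact ⟨C c₂ * l₁, by rw [hf₂]; ring⟩
    · exact ⟨C c₃ * l₃, by rw [hf₃]; ring⟩
    · exact ⟨C c₁ * l₁, by rw [hf₁]; ring⟩
    · exact ⟨C c₃ * l₂, by rw [hf₃]; ring⟩
    apply le_antisymm
    · refine Ideal.span_le.mpr ?_
      rw [Set.insert_subset_iff, Set.insert_subset_iff, Set.singleton_subset_iff]
      refine ⟨Submodule.mem_inf.mpr ⟨Submodule.mem_inf.mpr ⟨?_, ?_⟩, ?_⟩,
        Submodule.mem_inf.mpr ⟨Submodule.mem_inf.mpr ⟨?_, ?_⟩, ?_⟩,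
        Submodule.mem_inf.mpr ⟨Submodule.mem_inf.mpr ⟨?_, ?_⟩, ?_⟩⟩ <;>
        rw [Ideal.mem_span_pair]
      · exact ⟨C c₁ * l₃, 0, by linear_combination -hf₁⟩
      · exact ⟨0, C c₁ * l₁, by linear_combination -hf₁⟩
      · exact ⟨C c₁ * l₃, 0, by linear_combination -hf₁⟩
      · exact ⟨C c₂ * l₂, 0, by linear_combination -hf₂⟩
      · exact ⟨C c₂ * l₁, 0, by linear_combination -hf₂⟩
      · exact ⟨C c₂ * l₂, 0, by linear_combination -hf₂⟩
      · exact ⟨0, C c₃ * l₃, by linear_combination -hf₃⟩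
      · exact ⟨C c₃ * l₃, 0, by linear_combination -hf₃⟩
      · exact ⟨0, C c₃ * l₂, by linear_combination -hf₃⟩
    · intro g hg
      obtain ⟨hg', hg13⟩ := Submodule.mem_inf.mp hg
      obtain ⟨hg12, hg23⟩ := Submodule.mem_inf.mp hg'
      obtain ⟨a, b, hab⟩ := Ideal.mem_span_pair.mp hg12
      have hal : a * l₁ ∈ Ideal.span ({l₂, l₃} : Set (MvPolynomial (Fin (n + 1)) k)) := by
        have heq : a * l₁ = g - b * l₂ := by linear_combination hab
        rw [heq]
        exact sub_mem hg23 (Ideal.mul_mem_left _ b (Ideal.subset_span (by simp)))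
      obtain ⟨c, d, hcd⟩ :=
        Ideal.mem_span_pair.mp (linear_reg hl₁h hl₂h hl₃h hind3 a hal)
      have hbl : b * l₂ ∈ Ideal.span ({l₁, l₃} : Set (MvPolynomial (Fin (n + 1)) k)) := by
        have heq : b * l₂ = g - a * l₁ := by linear_combination hab
        rw [heq]
        exact sub_mem hg13 (Ideal.mul_mem_left _ a (Ideal.subset_span (by simp)))
      obtain ⟨e, f', hef⟩ :=
        Ideal.mem_span_pair.mp (linear_reg hl₂h hl₁h hl₃h (li_swap hind3) b hbl)
      have hm12 : l₁ * l₂ ∈ Ideal.span ({f₁, f₂, f₃} : Set (MvPolynomial (Fin (n + 1)) k)) := by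
        apply mem_of_C_mul hc₂
        rw [← hf₂]
        exact Ideal.subset_span (by simp)
      have hm13 : l₁ * l₃ ∈ Ideal.span ({f₁, f₂, f₃} : Set (MvPolynomial (Fin (n + 1)) k)) := by
        apply mem_of_C_mul hc₁
        rw [← hf₁]
        exact Ideal.subset_span (by simp)
      have hm23 : l₂ * l₃ ∈ Ideal.span ({f₁, f₂, f₃} : Set (MvPolynomial (Fin (n + 1)) k)) := by
        apply mem_of_C_mul hc₃
        rw [← hf₃]
        exact Ideal.subset_span (by simp)
      have hgeq : g = c * (l₁ * l₂) + d * (l₁ * l₃) + (e * (l₁ * l₂) + f' * (l₂ * l₃)) := by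
        linear_combination (-1 : MvPolynomial (Fin (n + 1)) k) * hab - l₁ * hcd - l₂ * hef
      rw [hgeq]
      exact add_mem (add_mem (Ideal.mul_mem_left _ _ hm12) (Ideal.mul_mem_left _ _ hm13))
        (add_mem (Ideal.mul_mem_left _ _ hm12) (Ideal.mul_mem_left _ _ hm23))
  · -- Case A : the three linear forms span a 2-dimensional space
    left
    have hmem : l₃ ∈ Submodule.span k (Set.range ![l₁, l₂]) := by
      by_contra hmem
      apply hind3
      have hsnoc : (Fin.snoc ![l₁, l₂] l₃ : Fin 3 → MvPolynomial (Fin (n + 1)) k)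
          = ![l₁, l₂, l₃] := by
        funext a; fin_cases a <;> simp [Fin.snoc] <;> rfl
      rw [← hsnoc]
      exact linearIndependent_fin_snoc.mpr ⟨hli12l, hmem⟩
    have hrange : Set.range ![l₁, l₂] = ({l₁, l₂} : Set (MvPolynomial (Fin (n + 1)) k)) := by
      rw [Set.pair_comm]
      simp [Matrix.range_cons, Matrix.range_empty]
    rw [hrange] at hmem
    obtain ⟨α, β, hαβ⟩ := Submodule.mem_span_pair.mp hmem
    rw [smul_eq_C_mul, smul_eq_C_mul] at hαβ
    have hl₃C : l₃ = C α * l₁ + C β * l₂ := hαβ.symm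
    have hα : α ≠ 0 := by
      intro h0
      apply h23
      exact ⟨C β, by rw [hl₃C, h0, map_zero, zero_mul, zero_add, mul_comm]⟩
    have hβ : β ≠ 0 := by
      intro h0
      apply h13
      exact ⟨C α, by rw [hl₃C, h0, map_zero, zero_mul, add_zero, mul_comm]⟩
    refine ⟨l₁, l₂, hl₁h, hl₂h, hli12l, ?_⟩
    rw [span_pair_sq]
    apply le_antisymm
    · refine Ideal.span_le.mpr ?_
      rw [Set.insert_subset_iff, Set.insert_subset_iff, Set.singleton_subset_iff]
      refine ⟨?_, ?_, ?_⟩ <;> rw [SetLike.mem_coe]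
      · have heq : f₁ = (C c₁ * C α) * (l₁ * l₁) + (C c₁ * C β) * (l₁ * l₂) := by
          linear_combination hf₁ + (C c₁ * l₁) * hl₃C
        rw [heq]
        exact add_mem (Ideal.mul_mem_left _ _ (Ideal.subset_span (by simp)))
          (Ideal.mul_mem_left _ _ (Ideal.subset_span (by simp)))
      · rw [hf₂]
        exact Ideal.mul_mem_left _ _ (Ideal.subset_span (by simp))
      · have heq : f₃ = (C c₃ * C α) * (l₁ * l₂) + (C c₃ * C β) * (l₂ * l₂) := by
          linear_combination hf₃ + (C c₃ * l₂) * hl₃C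
        rw [heq]
        exact add_mem (Ideal.mul_mem_left _ _ (Ideal.subset_span (by simp)))
          (Ideal.mul_mem_left _ _ (Ideal.subset_span (by simp)))
    · refine Ideal.span_le.mpr ?_
      rw [Set.insert_subset_iff, Set.insert_subset_iff, Set.singleton_subset_iff]
      refine ⟨?_, ?_, ?_⟩ <;> rw [SetLike.mem_coe]
      · apply mem_of_C_mul (u := c₂ * (c₁ * α)) (by simp [hc₂, hc₁, hα])
        have heq : C (c₂ * (c₁ * α)) * (l₁ * l₁) = C c₂ * f₁ - (C c₁ * C β) * f₂ := by
          rw [map_mul, map_mul]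
          linear_combination (-(C c₂)) * hf₁ - (C c₂ * C c₁ * l₁) * hl₃C + (C c₁ * C β) * hf₂
        rw [heq]
        exact sub_mem (Ideal.mul_mem_left _ _ (Ideal.subset_span (by simp)))
          (Ideal.mul_mem_left _ _ (Ideal.subset_span (by simp)))
      · apply mem_of_C_mul hc₂
        have heq : C c₂ * (l₁ * l₂) = f₂ := by linear_combination -hf₂
        rw [heq]
        exact Ideal.subset_span (by simp)
      · apply mem_of_C_mul (u := c₂ * (c₃ * β)) (by simp [hc₂, hc₃, hβ])
        have heq : C (c₂ * (c₃ * β)) * (l₂ * l₂) = C c₂ * f₃ - (C c₃ * C α) * f₂ := by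
          rw [map_mul, map_mul]
          linear_combination (-(C c₂)) * hf₃ - (C c₂ * C c₃ * l₂) * hl₃C + (C c₃ * C α) * hf₂
        rw [heq]
        exact sub_mem (Ideal.mul_mem_left _ _ (Ideal.subset_span (by simp)))
          (Ideal.mul_mem_left _ _ (Ideal.subset_span (by simp)))
end
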